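/- A topological space (X, 𝒯) is a LOTS if and only if there exists a nest 𝓛 on X that is T₀-separating and interlocking and such that 𝒯 equals the ⊴_𝓛-interval topology on X. -/

import Mathlib

/-- A nest on `X`: a family of subsets linearly ordered by inclusion. -/
def IsNest {X : Type*} (𝓛 : Set (Set X)) : Prop :=
  ∀ M ∈ 𝓛, ∀ N ∈ 𝓛, M ⊆ N ∨ N ⊆ M

/-- The relation `⊲_𝓛` induced by a nest. -/
def NestLT {X : Type*} (𝓛 : Set (Set X)) (x y : X) : Prop :=
  ∃ L ∈ 𝓛, x ∈ L ∧ y ∉ L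

/-- The reflexive relation `⊴_𝓛`. -/
def NestLE {X : Type*} (𝓛 : Set (Set X)) (x y : X) : Prop :=
  x = y ∨ NestLT 𝓛 x y

/-- `𝓛` T₀-separates `X`. -/
def T0Sep {X : Type*} (𝓛 : Set (Set X)) : Prop :=
  ∀ x y : X, x ≠ y → ∃ L ∈ 𝓛, (x ∈ L ∧ y ∉ L) ∨ (y ∈ L ∧ x ∉ L)

/-- `𝓛` is interlocking. -/
def Interlocking {X : Type*} (𝓛 : Set (Set X)) : Prop :=
  ∀ L ∈ 𝓛, L = ⋂₀ {N | N ∈ 𝓛 ∧ L ⊆ N ∧ L ≠ N} →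
    L = ⋃₀ {N | N ∈ 𝓛 ∧ N ⊆ L ∧ L ≠ N}

/-- The order topology of a relation `R`. -/
def orderTopologyOf {X : Type*} (R : X → X → Prop) : TopologicalSpace X :=
  TopologicalSpace.generateFrom
    ({S | ∃ a, S = {x | R x a}} ∪ {S | ∃ a, S = {x | R a x}})

/-- The interval topology of a relation `R`. -/
def intervalTopologyOf {X : Type*} (R : X → X → Prop) : TopologicalSpace X :=
  TopologicalSpace.generateFrom
    ({S | ∃ a, S = {x | R x a}ᶜ} ∪ {S | ∃ a, S = {x | R a x}ᶜ})

/-- `(X, t)` is a LOTS: some linear order on `X` induces the topology `t`. -/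
def IsLOTS {X : Type*} (t : TopologicalSpace X) : Prop :=
  ∃ _ : LinearOrder X, t = orderTopologyOf (fun a b : X => a < b)

section Aux
variable {X : Type*} {𝓛 : Set (Set X)}

lemma nestLT_irrefl (x : X) : ¬ NestLT 𝓛 x x := by
  rintro ⟨L, _, hx, hx'⟩; exact hx' hx

lemma nestLT_asymm (hN : IsNest 𝓛) {x y : X} (h : NestLT 𝓛 x y) : ¬ NestLT 𝓛 y x := by
  rintro ⟨M, hM, hyM, hxM⟩
  obtain ⟨L, hL, hxL, hyL⟩ := h
  rcases hN L hL M hM with hs | hs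
  · exact hxM (hs hxL)
  · exact hyL (hs hyM)

lemma nestLT_trans (hN : IsNest 𝓛) {x y z : X}
    (h1 : NestLT 𝓛 x y) (h2 : NestLT 𝓛 y z) : NestLT 𝓛 x z := by
  obtain ⟨L, hL, hxL, hyL⟩ := h1
  obtain ⟨M, hM, hyM, hzM⟩ := h2
  rcases hN L hL M hM with hs | hs
  · exact ⟨M, hM, hs hxL, hzM⟩
  · exact absurd (hs hyM) hyL

lemma nestLT_total (hT : T0Sep 𝓛) {x y : X} (h : x ≠ y) :
    NestLT 𝓛 x y ∨ NestLT 𝓛 y x := by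
  obtain ⟨L, hL, h1 | h2⟩ := hT x y h
  · exact Or.inl ⟨L, hL, h1⟩
  · exact Or.inr ⟨L, hL, h2⟩

lemma nest_not_le (hN : IsNest 𝓛) (hT : T0Sep 𝓛) (x y : X) :
    ¬ NestLE 𝓛 x y ↔ NestLT 𝓛 y x := by
  constructor
  · intro h
    rcases nestLT_total hT (fun hxy : x = y => h (Or.inl hxy)) with h' | h'
    · exact absurd (Or.inr h') h
    · exact h'
  · rintro h (rfl | h')
    · exact nestLT_irrefl _ h
    · exact nestLT_asymm hN h' h

lemma interval_eq_order {R : X → X → Prop}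
    (h : ∀ x y : X, ¬ (x = y ∨ R x y) ↔ R y x) :
    intervalTopologyOf (fun x y => x = y ∨ R x y) = orderTopologyOf R := by
  unfold intervalTopologyOf orderTopologyOf
  congr 1
  ext S
  simp only [Set.mem_union, Set.mem_setOf_eq]
  constructor
  · rintro (⟨a, rfl⟩ | ⟨a, rfl⟩)
    · right
      refine ⟨a, ?_⟩
      ext x
      simp only [Set.mem_compl_iff, Set.mem_setOf_eq]
      exact h x a
    · left
      refine ⟨a, ?_⟩
      ext x
      simp only [Set.mem_compl_iff, Set.mem_setOf_eq]
      exact h a x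
  · rintro (⟨a, rfl⟩ | ⟨a, rfl⟩)
    · right
      refine ⟨a, ?_⟩
      ext x
      simp only [Set.mem_compl_iff, Set.mem_setOf_eq]
      exact (h a x).symm
    · left
      refine ⟨a, ?_⟩
      ext x
      simp only [Set.mem_compl_iff, Set.mem_setOf_eq]
      exact (h x a).symm

end Aux

theorem isLOTS_iff_intervalTopology {X : Type*} (t : TopologicalSpace X) :
    IsLOTS t ↔
      ∃ 𝓛 : Set (Set X), IsNest 𝓛 ∧ T0Sep 𝓛 ∧ Interlocking 𝓛 ∧
        t = intervalTopologyOf (NestLE 𝓛) := by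
  constructor
  · rintro ⟨inst, ht⟩
    subst ht
    set 𝓛 : Set (Set X) := {S | ∃ a : X, S = {x | x < a}} with h𝓛
    have hlt : ∀ x y : X, NestLT 𝓛 x y ↔ x < y := by
      intro x y
      constructor
      · rintro ⟨L, ⟨c, rfl⟩, hx, hy⟩
        exact lt_of_lt_of_le hx (not_lt.mp hy)
      · intro h
        exact ⟨{x | x < y}, ⟨y, rfl⟩, h, lt_irrefl y⟩
    have hNest : IsNest 𝓛 := by
      rintro M ⟨a, rfl⟩ N ⟨b, rfl⟩
      rcases le_total a b with h | h
      · exact Or.inl fun x hx => lt_of_lt_of_le hx h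
      · exact Or.inr fun x hx => lt_of_lt_of_le hx h
    have hT0 : T0Sep 𝓛 := by
      intro x y hxy
      rcases lt_or_gt_of_ne hxy with h | h
      · exact ⟨{z | z < y}, ⟨y, rfl⟩, Or.inl ⟨h, lt_irrefl y⟩⟩
      · exact ⟨{z | z < x}, ⟨x, rfl⟩, Or.inr ⟨h, lt_irrefl x⟩⟩
    refine ⟨𝓛, hNest, hT0, ?_, ?_⟩
    · -- Interlocking : hypothesis always fails
      rintro L ⟨a, rfl⟩ hEq
      exfalso
      have ha : a ∈ ⋂₀ {N | N ∈ 𝓛 ∧ {x | x < a} ⊆ N ∧ {x | x < a} ≠ N} := by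
        rintro N ⟨⟨c, rfl⟩, hsub, hne⟩
        obtain ⟨d, hdN, hdL⟩ := Set.exists_of_ssubset ⟨hsub, fun h => hne (le_antisymm hsub h)⟩
        exact lt_of_le_of_lt (not_lt.mp hdL) hdN
      rw [← hEq] at ha
      exact lt_irrefl a ha
    · have h1 : NestLT 𝓛 = fun a b : X => a < b := by
        funext x y
        exact propext (hlt x y)
      have h2 : intervalTopologyOf (NestLE 𝓛)
          = orderTopologyOf (NestLT 𝓛) :=
        interval_eq_order (nest_not_le hNest hT0)
      rw [h2, h1]
  · rintro ⟨𝓛, hNest, hT0, _hInt, rfl⟩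
    refine ⟨{ le := NestLE 𝓛
              lt := NestLT 𝓛
              le_refl := fun x => Or.inl rfl
              le_trans := by
                rintro x y z (rfl | h1) h2
                · exact h2
                · rcases h2 with rfl | h2
                  · exact Or.inr h1
                  · exact Or.inr (nestLT_trans hNest h1 h2)
              le_antisymm := by
                rintro x y (rfl | h1) h2
                · rfl
                · rcases h2 with rfl | h2
                  · rfl
                  · exact absurd h2 (nestLT_asymm hNest h1)
              le_total := by
                intro x y
                by_cases h : x = y
                · exact Or.inl (Or.inl h)
                · rcases nestLT_total hT0 h with h' | h'
                  · exact Or.inl (Or.inr h')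
                  · exact Or.inr (Or.inr h')
              lt_iff_le_not_ge := by
                intro x y
                constructor
                · intro h
                  refine ⟨Or.inr h, ?_⟩
                  rintro (rfl | h')
                  · exact nestLT_irrefl _ h
                  · exact nestLT_asymm hNest h h'
                · rintro ⟨rfl | h1, h2⟩
                  · exact absurd (Or.inl rfl) h2
                  · exact h1
              toDecidableLE := fun _ _ => Classical.propDecidable _ }, ?_⟩
    show intervalTopologyOf (fun x y => x = y ∨ NestLT 𝓛 x y) = orderTopologyOf (NestLT 𝓛)
    exact interval_eq_order (nest_not_le hNest hT0)
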